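/- Suppose the abstract equation u = Lf + N(u,u) is quantitatively well-posed, i.e. ‖Lf‖_S ≤ C₁‖f‖_D and ‖N(u,v)‖_S ≤ C₂‖u‖_S‖v‖_S for Banach spaces D, S. Define A₁f = Lf and A_m f = Σ_{k+l=m, k,l≥1} N(A_k f, A_l f) for m ≥ 2. Then there exists a constant C > 0 independent of m such that ‖A_m f‖_S ≤ (C‖f‖_D)^m for all m ∈ ℕ and f ∈ D. -/

import Mathlib

lemma sum_inv_sq_le_two (n : ℕ) : ∑ k ∈ Finset.Icc 1 n, (1:ℝ)/(k:ℝ)^2 ≤ 2 := by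
  have h : ∑ k ∈ Finset.Icc 1 n, (1:ℝ)/(k:ℝ)^2 ≤ 2 - 1/n := by
    induction n with
    | zero => simp
    | succ n ih =>
      rw [Finset.sum_Icc_succ_top (by omega)]
      rcases Nat.eq_zero_or_pos n with h | h
      · subst h; norm_num
      · have hn : (1:ℝ) ≤ (n:ℝ) := by exact_mod_cast h
        have : (1:ℝ)/((n+1:ℕ):ℝ)^2 ≤ 1/n - 1/((n:ℝ)+1) := by
          push_cast
          rw [div_sub_div _ _ (by linarith) (by linarith)]
          rw [div_le_div_iff₀ (by positivity) (by positivity)]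
          nlinarith
        push_cast at this ⊢
        linarith
  have : (0:ℝ) ≤ 1/n := by positivity
  linarith

lemma conv_sum_le (m : ℕ) (hm : 2 ≤ m) :
    ∑ k ∈ Finset.Ico 1 m, (1:ℝ)/((k:ℝ)^2 * ((m - k : ℕ):ℝ)^2) ≤ 8 / (m:ℝ)^2 := by
  have hmR : (2:ℝ) ≤ (m:ℝ) := by exact_mod_cast hm
  have hstep : ∀ k ∈ Finset.Ico 1 m,
      (1:ℝ)/((k:ℝ)^2 * ((m - k : ℕ):ℝ)^2)
        ≤ 2/(m:ℝ)^2 * ((1:ℝ)/(k:ℝ)^2 + 1/((m - k : ℕ):ℝ)^2) := by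
    intro k hk
    rw [Finset.mem_Ico] at hk
    obtain ⟨h1, h2⟩ := hk
    have ha : (1:ℝ) ≤ (k:ℝ) := by exact_mod_cast h1
    have hb : (1:ℝ) ≤ ((m - k : ℕ):ℝ) := by
      have : 1 ≤ m - k := by omega
      exact_mod_cast this
    have hab : (k:ℝ) + ((m - k : ℕ):ℝ) = (m:ℝ) := by
      have : k + (m - k) = m := by omega
      exact_mod_cast this
    set a := (k:ℝ); set b := ((m - k : ℕ):ℝ)
    rw [← hab]
    rw [div_add_div _ _ (by positivity) (by positivity), div_mul_div_comm,
      div_le_div_iff₀ (by positivity) (by positivity)]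
    nlinarith [sq_nonneg (a - b), sq_nonneg (a*b), sq_nonneg (a+b), mul_pos (by linarith : (0:ℝ) < a) (by linarith : (0:ℝ) < b)]
  calc ∑ k ∈ Finset.Ico 1 m, (1:ℝ)/((k:ℝ)^2 * ((m - k : ℕ):ℝ)^2)
      ≤ ∑ k ∈ Finset.Ico 1 m, 2/(m:ℝ)^2 * ((1:ℝ)/(k:ℝ)^2 + 1/((m - k : ℕ):ℝ)^2) :=
        Finset.sum_le_sum hstep
    _ = 2/(m:ℝ)^2 * (∑ k ∈ Finset.Ico 1 m, (1:ℝ)/(k:ℝ)^2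
          + ∑ k ∈ Finset.Ico 1 m, (1:ℝ)/((m - k : ℕ):ℝ)^2) := by
        rw [← Finset.mul_sum, Finset.sum_add_distrib]
    _ ≤ 2/(m:ℝ)^2 * (2 + 2) := by
        have e1 : ∑ k ∈ Finset.Ico 1 m, (1:ℝ)/(k:ℝ)^2 ≤ 2 := by
          have : Finset.Ico 1 m = Finset.Icc 1 (m-1) := by
            ext x; simp [Finset.mem_Ico, Finset.mem_Icc]; omega
          rw [this]; exact sum_inv_sq_le_two _
        have e2 : ∑ k ∈ Finset.Ico 1 m, (1:ℝ)/((m - k : ℕ):ℝ)^2 ≤ 2 := by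
          have : ∑ k ∈ Finset.Ico 1 m, (1:ℝ)/((m - k : ℕ):ℝ)^2
              = ∑ k ∈ Finset.Ico 1 m, (1:ℝ)/(k:ℝ)^2 := by
            apply Finset.sum_nbij' (fun k => m - k) (fun k => m - k)
            · intro k hk; rw [Finset.mem_Ico] at *; omega
            · intro k hk; rw [Finset.mem_Ico] at *; omega
            · intro k hk; rw [Finset.mem_Ico] at hk; omega
            · intro k hk; rw [Finset.mem_Ico] at hk; omega
            · intro k hk; rfl
          rw [this]
          have : Finset.Ico 1 m = Finset.Icc 1 (m-1) := by
            ext x; simp [Finset.mem_Ico, Finset.mem_Icc]; omega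
          rw [this]; exact sum_inv_sq_le_two _
        have h2m : (0:ℝ) < 2/(m:ℝ)^2 := by positivity
        nlinarith
    _ = 8 / (m:ℝ)^2 := by ring


/-- Under quantitative well-posedness (`‖Lf‖ ≤ C₁‖f‖`, `‖N(u,v)‖ ≤ C₂‖u‖‖v‖`), the Picard
iterates `A₁ f = Lf`, `A_m f = Σ_{k+l=m, k,l ≥ 1} N(A_k f, A_l f)` satisfy
`‖A_m f‖ ≤ (C‖f‖)^m` for a constant `C` independent of `m`. -/
theorem picard_iterate_bound
    {D S : Type*} [NormedAddCommGroup D] [NormedSpace ℝ D] [CompleteSpace D]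
    [NormedAddCommGroup S] [NormedSpace ℝ S] [CompleteSpace S]
    (L : D →L[ℝ] S) (N : S →L[ℝ] S →L[ℝ] S) (C₁ C₂ : ℝ)
    (hL : ∀ f : D, ‖L f‖ ≤ C₁ * ‖f‖)
    (hN : ∀ u v : S, ‖N u v‖ ≤ C₂ * ‖u‖ * ‖v‖)
    (A : ℕ → D → S)
    (hA1 : ∀ f : D, A 1 f = L f)
    (hAm : ∀ m : ℕ, 2 ≤ m → ∀ f : D,
      A m f = ∑ k ∈ Finset.Ico 1 m, N (A k f) (A (m - k) f)) :
    ∃ C : ℝ, 0 < C ∧ ∀ m : ℕ, 1 ≤ m → ∀ f : D, ‖A m f‖ ≤ (C * ‖f‖) ^ m := by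
  set c : ℝ := max C₁ 1 with hc
  set d : ℝ := max C₂ 1 with hd
  have hc1 : 1 ≤ c := le_max_right _ _
  have hd1 : 1 ≤ d := le_max_right _ _
  set β : ℝ := 8 * d with hβ
  have hβ8 : (8:ℝ) ≤ β := by nlinarith
  set C : ℝ := β * c with hC
  have hCpos : 0 < C := by positivity
  refine ⟨C, hCpos, ?_⟩
  have hL' : ∀ f : D, ‖L f‖ ≤ c * ‖f‖ := fun f =>
    le_trans (hL f) (mul_le_mul_of_nonneg_right (le_max_left _ _) (norm_nonneg f))
  have hN' : ∀ u v : S, ‖N u v‖ ≤ d * ‖u‖ * ‖v‖ := fun u v =>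
    le_trans (hN u v) (by
      have := mul_nonneg (norm_nonneg u) (norm_nonneg v)
      nlinarith [le_max_left C₂ 1])
  -- key claim
  have key : ∀ m : ℕ, 1 ≤ m → ∀ f : D, ‖A m f‖ ≤ (C * ‖f‖) ^ m / (β * (m:ℝ)^2) := by
    intro m
    induction m using Nat.strong_induction_on with
    | _ m ih =>
      intro hm f
      rcases eq_or_lt_of_le hm with h1 | h2
      · -- m = 1
        subst h1
        simp only [pow_one, Nat.cast_one, one_pow, mul_one]
        rw [hA1]
        calc ‖L f‖ ≤ c * ‖f‖ := hL' f
          _ = β * c * ‖f‖ / β := by field_simp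
          _ = C * ‖f‖ / β := by rw [hC]
      · -- m ≥ 2
        have hm2 : 2 ≤ m := h2
        rw [hAm m hm2 f]
        have hterm : ∀ k ∈ Finset.Ico 1 m,
            ‖N (A k f) (A (m - k) f)‖
              ≤ d * (C * ‖f‖) ^ m / β^2 * ((1:ℝ)/((k:ℝ)^2 * ((m - k : ℕ):ℝ)^2)) := by
          intro k hk
          rw [Finset.mem_Ico] at hk
          obtain ⟨hk1, hk2⟩ := hk
          have hmk1 : 1 ≤ m - k := by omega
          have hk' : ‖A k f‖ ≤ (C * ‖f‖) ^ k / (β * (k:ℝ)^2) := ih k hk2 hk1 f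
          have hmk' : ‖A (m-k) f‖ ≤ (C * ‖f‖) ^ (m-k) / (β * ((m-k:ℕ):ℝ)^2) :=
            ih (m-k) (by omega) hmk1 f
          have hkpos : (0:ℝ) < (k:ℝ) := by exact_mod_cast hk1
          have hmkpos : (0:ℝ) < ((m-k:ℕ):ℝ) := by exact_mod_cast hmk1
          have hβpos : (0:ℝ) < β := by linarith
          calc ‖N (A k f) (A (m - k) f)‖
              ≤ d * ‖A k f‖ * ‖A (m-k) f‖ := hN' _ _
            _ ≤ d * ((C * ‖f‖) ^ k / (β * (k:ℝ)^2)) * ((C * ‖f‖) ^ (m-k) / (β * ((m-k:ℕ):ℝ)^2)) := by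
                apply mul_le_mul
                · apply mul_le_mul_of_nonneg_left hk' (by linarith)
                · exact hmk'
                · exact norm_nonneg _
                · positivity
            _ = d * (C * ‖f‖) ^ m / β^2 * ((1:ℝ)/((k:ℝ)^2 * ((m - k : ℕ):ℝ)^2)) := by
                rw [show m = k + (m - k) by omega, pow_add]
                field_simp
                rw [Nat.add_sub_cancel_left]
        have hmR : (0:ℝ) < (m:ℝ) := by positivity
        have hβpos : (0:ℝ) < β := by linarith
        calc ‖∑ k ∈ Finset.Ico 1 m, N (A k f) (A (m - k) f)‖
            ≤ ∑ k ∈ Finset.Ico 1 m, ‖N (A k f) (A (m - k) f)‖ := norm_sum_le _ _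
          _ ≤ ∑ k ∈ Finset.Ico 1 m,
                d * (C * ‖f‖) ^ m / β^2 * ((1:ℝ)/((k:ℝ)^2 * ((m - k : ℕ):ℝ)^2)) :=
              Finset.sum_le_sum hterm
          _ = d * (C * ‖f‖) ^ m / β^2 *
                ∑ k ∈ Finset.Ico 1 m, (1:ℝ)/((k:ℝ)^2 * ((m - k : ℕ):ℝ)^2) := by
              rw [Finset.mul_sum]
          _ ≤ d * (C * ‖f‖) ^ m / β^2 * (8 / (m:ℝ)^2) := by
              apply mul_le_mul_of_nonneg_left (conv_sum_le m hm2)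
              positivity
          _ = (C * ‖f‖) ^ m / (β * (m:ℝ)^2) := by
              rw [hβ]
              field_simp
  intro m hm f
  have h := key m hm f
  have hmR : (1:ℝ) ≤ (m:ℝ) := by exact_mod_cast hm
  have hnum : (0:ℝ) ≤ (C * ‖f‖) ^ m := by positivity
  have hden : (1:ℝ) ≤ β * (m:ℝ)^2 := by nlinarith
  calc ‖A m f‖ ≤ (C * ‖f‖) ^ m / (β * (m:ℝ)^2) := h
    _ ≤ (C * ‖f‖) ^ m / 1 := by
        apply div_le_div_of_nonneg_left hnum one_pos hden -- may need order fix
    _ = (C * ‖f‖) ^ m := div_one _
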